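/- Let q ≥ 1 be an integer, let r_1,…,r_q be positive real numbers and d_1,…,d_q real numbers. Then the supremum, over all nonzero weakly increasing vectors w ∈ ℝ^q, of the ratio Ψ(w) = −(Σ_{i=1}^q d_i w_i)/(Σ_{i=1}^q r_i w_i²)^{1/2}, equals the maximum of Φ(P) = (Σ_{j=1}^m D_j²/R_j)^{1/2} taken over all slope-decreasing coarsenings P of the data (this maximum is over a nonempty finite set, since the trivial coarsening m = 1 is vacuously slope-decreasing). In particular the supremum is finite and attained. -/

import Mathlib

open Finset

namespace HNaux

lemma mediant_le {x1 x2 x3 y1 y2 y3 : ℝ} (h12 : x1 < x2) (h23 : x2 < x3)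
    (h : (y3 - y1)/(x3 - x1) ≤ (y2 - y1)/(x2 - x1)) :
    (y3 - y2)/(x3 - x2) ≤ (y2 - y1)/(x2 - x1) := by
  rw [div_le_div_iff₀ (by linarith) (by linarith)] at h ⊢
  nlinarith [h]

lemma mediant_lt {x1 x2 x3 y1 y2 y3 : ℝ} (h12 : x1 < x2) (h23 : x2 < x3)
    (h : (y3 - y1)/(x3 - x1) < (y2 - y1)/(x2 - x1)) :
    (y3 - y2)/(x3 - x2) < (y2 - y1)/(x2 - x1) := by
  rw [div_lt_div_iff₀ (by linarith) (by linarith)] at h ⊢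
  nlinarith [h]

section Generic

-- block decomposition of a sum over range (idx n)
lemma sum_blocks (f : ℕ → ℝ) (idx : ℕ → ℕ) (h0 : idx 0 = 0) (n : ℕ)
    (hmono : ∀ j, j < n → idx j ≤ idx (j+1)) :
    ∑ i ∈ range (idx n), f i = ∑ j ∈ Icc 1 n, ∑ i ∈ Ico (idx (j-1)) (idx j), f i := by
  induction n with
  | zero => simp [h0]
  | succ n ih =>
    have h1 : ∑ j ∈ Icc 1 (n+1), ∑ i ∈ Ico (idx (j-1)) (idx j), f i
        = (∑ j ∈ Icc 1 n, ∑ i ∈ Ico (idx (j-1)) (idx j), f i)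
          + ∑ i ∈ Ico (idx n) (idx (n+1)), f i := by
      rw [Finset.sum_Icc_succ_top (by omega)]
      simp
    rw [h1, ← ih (fun j hj => hmono j (by omega))]
    have h2 : idx n ≤ idx (n+1) := hmono n (by omega)
    rw [Finset.range_eq_Ico, Finset.range_eq_Ico]
    exact (Finset.sum_Ico_consecutive f (Nat.zero_le (idx n)) h2).symm

variable {q m : ℕ} {idx : ℕ → ℕ}

-- weak monotonicity on [0,m]
lemma idx_mono (hmono : ∀ j j', j < j' → j' ≤ m → idx j < idx j')
    {a b : ℕ} (hab : a ≤ b) (hb : b ≤ m) : idx a ≤ idx b := by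
  rcases lt_or_eq_of_le hab with h | h
  · exact (hmono a b h hb).le
  · rw [h]

/-- the block of index i -/
noncomputable def blk (idx : ℕ → ℕ) (i : ℕ) : ℕ := sInf {j | i < idx j}

lemma blk_spec (hmono : ∀ j j', j < j' → j' ≤ m → idx j < idx j')
    (h0 : idx 0 = 0) (hm : idx m = q) {i : ℕ} (hi : i < q) :
    1 ≤ blk idx i ∧ blk idx i ≤ m ∧ idx (blk idx i - 1) ≤ i ∧ i < idx (blk idx i) := by
  have hne : {j | i < idx j}.Nonempty := ⟨m, by simpa [hm] using hi⟩
  have hmem : i < idx (blk idx i) := Nat.sInf_mem hne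
  have hle : blk idx i ≤ m := Nat.sInf_le (by simpa [hm] using hi)
  have h1 : 1 ≤ blk idx i := by
    by_contra h
    have : blk idx i = 0 := by omega
    rw [this, h0] at hmem; omega
  refine ⟨h1, hle, ?_, hmem⟩
  have hgt : blk idx i - 1 < sInf {j | i < idx j} := by
    show blk idx i - 1 < blk idx i
    omega
  have := Nat.notMem_of_lt_sInf hgt
  simpa using Nat.le_of_not_lt this

lemma blk_eq (hmono : ∀ j j', j < j' → j' ≤ m → idx j < idx j')
    (h0 : idx 0 = 0) (hm : idx m = q) {i j : ℕ} (hj1 : 1 ≤ j) (hjm : j ≤ m)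
    (hlo : idx (j-1) ≤ i) (hhi : i < idx j) : blk idx i = j := by
  have hi : i < q := lt_of_lt_of_le hhi (by rw [← hm]; exact idx_mono hmono hjm le_rfl)
  obtain ⟨h1, hle, hlo', hhi'⟩ := blk_spec hmono h0 hm hi
  have hle2 : blk idx i ≤ j := Nat.sInf_le hhi
  by_contra hne
  have hlt : blk idx i < j := by omega
  have : idx (blk idx i) ≤ idx (j-1) := idx_mono hmono (by omega) (by omega)
  omega

lemma blk_mono (hmono : ∀ j j', j < j' → j' ≤ m → idx j < idx j')
    (h0 : idx 0 = 0) (hm : idx m = q) {i i' : ℕ} (hii : i ≤ i') (hi' : i' < q) :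
    blk idx i ≤ blk idx i' := by
  have hne : {j | i' < idx j}.Nonempty := ⟨m, by simpa [hm] using hi'⟩
  have hmem : i' < idx (blk idx i') := Nat.sInf_mem hne
  exact Nat.sInf_le (by exact lt_of_le_of_lt hii hmem)

end Generic

section Attain

variable (q : ℕ) (r d : ℕ → ℝ)

lemma block_pos (hr : ∀ i, i < q → 0 < r i) {a b : ℕ} (hab : a < b) (hb : b ≤ q) :
    0 < ∑ i ∈ Ico a b, r i :=
  Finset.sum_pos (fun i hi => hr i (by simp at hi; omega)) (by simp [hab])

lemma cons_attain (hr : ∀ i, i < q → 0 < r i)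
    (m : ℕ) (idx : ℕ → ℕ) (hm0 : 0 < m)
    (hmono : ∀ j j', j < j' → j' ≤ m → idx j < idx j')
    (h0 : idx 0 = 0) (hmq : idx m = q)
    (hdec : ∀ j, 1 ≤ j → j < m →
      (∑ i ∈ Ico (idx j) (idx (j+1)), d i) / (∑ i ∈ Ico (idx j) (idx (j+1)), r i) <
      (∑ i ∈ Ico (idx (j-1)) (idx j), d i) / (∑ i ∈ Ico (idx (j-1)) (idx j), r i))
    (hT : (∑ j ∈ Icc 1 m, (∑ i ∈ Ico (idx (j-1)) (idx j), d i)^2 /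
      (∑ i ∈ Ico (idx (j-1)) (idx j), r i)) ≠ 0) :
    ∃ w : ℕ → ℝ, (∃ i, i < q ∧ w i ≠ 0) ∧ (∀ i j, i ≤ j → j < q → w i ≤ w j) ∧
      -(∑ i ∈ range q, d i * w i) / Real.sqrt (∑ i ∈ range q, r i * w i ^ 2)
        = Real.sqrt (∑ j ∈ Icc 1 m, (∑ i ∈ Ico (idx (j-1)) (idx j), d i)^2 /
            (∑ i ∈ Ico (idx (j-1)) (idx j), r i)) := by
  set D : ℕ → ℝ := fun j => ∑ i ∈ Ico (idx (j-1)) (idx j), d i with hD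
  set R : ℕ → ℝ := fun j => ∑ i ∈ Ico (idx (j-1)) (idx j), r i with hR
  set T : ℝ := ∑ j ∈ Icc 1 m, (D j)^2 / R j with hTdef
  set μ : ℕ → ℝ := fun j => D j / R j with hμ
  -- positivity of R on [1,m]
  have hidxle : ∀ j, j ≤ m → idx j ≤ q := by
    intro j hj
    rw [← hmq]
    exact idx_mono hmono hj le_rfl
  have hRpos : ∀ j, 1 ≤ j → j ≤ m → 0 < R j := by
    intro j h1 h2
    exact block_pos q r hr (hmono (j-1) j (by omega) h2) (hidxle j h2)
  -- μ weakly antitone on [1,m]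
  have hμanti : ∀ j j', 1 ≤ j → j ≤ j' → j' ≤ m → μ j' ≤ μ j := by
    intro j j' h1 h2 h3
    induction j' with
    | zero => omega
    | succ j' ih =>
      rcases Nat.lt_or_ge j (j'+1) with h | h
      · have hd := hdec j' (by omega) (by omega)
        have : μ (j'+1) < μ j' := by simpa [hμ, hD, hR] using hd
        exact le_trans this.le (ih (by omega) (by omega))
      · have : j = j' + 1 := by omega
        rw [this]
    -- nonneg of T and positivity
  have hTnn : 0 ≤ T := by
    apply Finset.sum_nonneg
    intro j hj
    simp only [Finset.mem_Icc] at hj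
    exact div_nonneg (sq_nonneg _) (hRpos j hj.1 hj.2).le
  have hTpos : 0 < T := lt_of_le_of_ne hTnn (Ne.symm hT)
  -- the weight vector
  set w : ℕ → ℝ := fun i => -(μ (blk idx i)) with hw
  -- blk facts
  have hblk : ∀ i, i < q → 1 ≤ blk idx i ∧ blk idx i ≤ m ∧
      idx (blk idx i - 1) ≤ i ∧ i < idx (blk idx i) :=
    fun i hi => blk_spec hmono h0 hmq hi
  have hblkeq : ∀ j i, 1 ≤ j → j ≤ m → idx (j-1) ≤ i → i < idx j → blk idx i = j :=
    fun j i h1 h2 h3 h4 => blk_eq hmono h0 hmq h1 h2 h3 h4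
  -- sums over blocks
  have hsum : ∀ f : ℕ → ℝ, ∑ i ∈ range q, f i
      = ∑ j ∈ Icc 1 m, ∑ i ∈ Ico (idx (j-1)) (idx j), f i := by
    intro f
    rw [← hmq]
    exact sum_blocks f idx h0 m (fun j hj => (hmono j (j+1) (by omega) (by omega)).le)
  have hconst : ∀ (f : ℕ → ℝ) (j), 1 ≤ j → j ≤ m →
      ∑ i ∈ Ico (idx (j-1)) (idx j), f i * w i
        = -(μ j) * ∑ i ∈ Ico (idx (j-1)) (idx j), f i := by
    intro f j h1 h2
    rw [Finset.mul_sum]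
    apply Finset.sum_congr rfl
    intro i hi
    simp only [Finset.mem_Ico] at hi
    simp only [hw]
    rw [hblkeq j i h1 h2 hi.1 hi.2]
    ring
  have hT2 : (∑ j ∈ Icc 1 m, (D j)^2 / R j) ≠ 0 := by rw [← hTdef]; exact hTpos.ne'
  obtain ⟨j0, hj0mem, hj0⟩ := Finset.exists_ne_zero_of_sum_ne_zero hT2
  simp only [Finset.mem_Icc] at hj0mem
  have hR00 : R j0 ≠ 0 := (hRpos j0 hj0mem.1 hj0mem.2).ne'
  have hD0 : D j0 ≠ 0 := by
    intro h; apply hj0; rw [h]; simp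
  have hμ0 : μ j0 ≠ 0 := by
    simp only [hμ]
    exact div_ne_zero hD0 hR00
  have hi0lt : idx (j0-1) < idx j0 := hmono (j0-1) j0 (by omega) hj0mem.2
  have hi0q : idx (j0-1) < q := lt_of_lt_of_le hi0lt (hidxle j0 hj0mem.2)
  have hblki0 : blk idx (idx (j0-1)) = j0 := hblkeq j0 _ hj0mem.1 hj0mem.2 le_rfl hi0lt
  have hsd : ∑ i ∈ range q, d i * w i = -T := by
    rw [hsum (fun i => d i * w i)]
    have hcg : ∀ j ∈ Icc 1 m, ∑ i ∈ Ico (idx (j-1)) (idx j), d i * w i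
        = -((D j)^2 / R j) := by
      intro j hj
      simp only [Finset.mem_Icc] at hj
      rw [hconst d j hj.1 hj.2]
      have hDj : ∑ i ∈ Ico (idx (j-1)) (idx j), d i = D j := by rw [hD]
      have hR0 : R j ≠ 0 := (hRpos j hj.1 hj.2).ne'
      rw [hDj]
      simp only [hμ]
      field_simp
    rw [Finset.sum_congr rfl hcg, Finset.sum_neg_distrib, hTdef]
  have hsr : ∑ i ∈ range q, r i * w i ^ 2 = T := by
    rw [hsum (fun i => r i * w i ^ 2), hTdef]
    apply Finset.sum_congr rfl
    intro j hj
    simp only [Finset.mem_Icc] at hj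
    have hR0 : R j ≠ 0 := (hRpos j hj.1 hj.2).ne'
    have hcg : ∀ i ∈ Ico (idx (j-1)) (idx j), r i * w i ^ 2 = μ j ^ 2 * r i := by
      intro i hi
      simp only [Finset.mem_Ico] at hi
      simp only [hw, hblkeq j i hj.1 hj.2 hi.1 hi.2]
      ring
    rw [Finset.sum_congr rfl hcg, ← Finset.mul_sum]
    have hRj : ∑ i ∈ Ico (idx (j-1)) (idx j), r i = R j := by rw [hR]
    rw [hRj]
    simp only [hμ]
    field_simp
  refine ⟨w, ⟨idx (j0-1), hi0q, ?_⟩, ?_, ?_⟩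
  · simp only [hw, hblki0]
    simpa using hμ0
  · intro i j hij hj
    have hbm := blk_mono hmono h0 hmq hij hj
    have h1 := hblk i (lt_of_le_of_lt hij hj)
    have h2 := hblk j hj
    simp only [hw]
    have := hμanti (blk idx i) (blk idx j) h1.1 hbm h2.2.1
    linarith
  · rw [hsd, hsr, neg_neg, Real.div_sqrt, hTdef]

end Attain

end HNaux

namespace HNaux

section HN

variable (q : ℕ) (r d : ℕ → ℝ)

noncomputable def rr (k : ℕ) : ℝ := ∑ i ∈ range k, r i
noncomputable def dd (k : ℕ) : ℝ := ∑ i ∈ range k, d i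
noncomputable def sl (a b : ℕ) : ℝ := (dd d b - dd d a) / (rr r b - rr r a)

open scoped Classical in
noncomputable def nxt (k : ℕ) : ℕ :=
  if k < q then
    Nat.findGreatest (fun j => k < j ∧ ∀ j' ∈ Ioc k q, sl r d k j' ≤ sl r d k j) q
  else k + 1

noncomputable def hnidx (n : ℕ) : ℕ := (nxt q r d)^[n] 0

noncomputable def mm : ℕ := sInf {n | hnidx q r d n = q}

variable (hq : 1 ≤ q) (hr : ∀ i, i < q → 0 < r i)

include hr in
lemma rr_lt {a b : ℕ} (hab : a < b) (hb : b ≤ q) : rr r a < rr r b := by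
  have : rr r b - rr r a = ∑ i ∈ Ico a b, r i := by
    rw [rr, rr, Finset.range_eq_Ico, Finset.range_eq_Ico, eq_comm, eq_sub_iff_add_eq, add_comm]
    exact Finset.sum_Ico_consecutive r (Nat.zero_le a) hab.le
  have hpos : 0 < ∑ i ∈ Ico a b, r i :=
    Finset.sum_pos (fun i hi => hr i (by simp at hi; omega)) (by simp [hab])
  linarith [this ▸ hpos]

lemma nxt_spec {k : ℕ} (hk : k < q) :
    k < nxt q r d k ∧ nxt q r d k ≤ q ∧
    (∀ j, k < j → j ≤ q → sl r d k j ≤ sl r d k (nxt q r d k)) ∧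
    (∀ j, nxt q r d k < j → j ≤ q → sl r d k j < sl r d k (nxt q r d k)) := by
  classical
  set P : ℕ → Prop := fun j => k < j ∧ ∀ j' ∈ Ioc k q, sl r d k j' ≤ sl r d k j with hP
  have hnxt : nxt q r d k = Nat.findGreatest P q := by
    rw [nxt, if_pos hk]
  obtain ⟨b, hb, hmax⟩ := Finset.exists_max_image (Ioc k q) (sl r d k)
    ⟨k+1, by simp [mem_Ioc]; omega⟩
  have hbIoc := Finset.mem_Ioc.1 hb
  have hPb : P b := ⟨hbIoc.1, hmax⟩
  have hspec : P (Nat.findGreatest P q) := Nat.findGreatest_spec hbIoc.2 hPb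
  have hle : Nat.findGreatest P q ≤ q := Nat.findGreatest_le q
  refine ⟨by rw [hnxt]; exact hspec.1, by rw [hnxt]; exact hle, ?_, ?_⟩
  · intro j hj hjq
    rw [hnxt]
    exact hspec.2 j (Finset.mem_Ioc.2 ⟨hj, hjq⟩)
  · intro j hj hjq
    rw [hnxt] at hj ⊢
    have hnP : ¬ P j := Nat.findGreatest_is_greatest hj hjq
    have hkj : k < j := lt_trans hspec.1 hj
    simp only [hP] at hnP
    push_neg at hnP
    obtain ⟨j', hj', hgt⟩ := hnP hkj
    have := hspec.2 j' hj'
    linarith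

lemma nxt_gt (k : ℕ) : k < nxt q r d k := by
  by_cases hk : k < q
  · exact (nxt_spec q r d hk).1
  · rw [nxt, if_neg hk]; omega

lemma hnidx_zero : hnidx q r d 0 = 0 := rfl

lemma hnidx_succ (n : ℕ) : hnidx q r d (n+1) = nxt q r d (hnidx q r d n) :=
  Function.iterate_succ_apply' _ _ _

lemma hnidx_ge (n : ℕ) : n ≤ hnidx q r d n := by
  induction n with
  | zero => omega
  | succ n ih =>
    have := nxt_gt q r d (hnidx q r d n)
    rw [hnidx_succ]
    omega

include hq in
lemma mm_spec : hnidx q r d (mm q r d) = q ∧ ∀ j, j < mm q r d → hnidx q r d j < q := by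
  have hex : ∃ n, hnidx q r d n = q := by
    by_contra h
    push_neg at h
    have hlt : ∀ n, hnidx q r d n < q := by
      intro n
      induction n with
      | zero => rw [hnidx_zero]; omega
      | succ n ih =>
        have h2 := (nxt_spec q r d ih).2.1
        have h3 := hnidx_succ q r d n
        have h4 := h (n+1)
        omega
    have := hnidx_ge q r d q
    have := hlt q
    omega
  constructor
  · exact Nat.sInf_mem hex
  · intro j hj
    induction j with
    | zero => rw [hnidx_zero]; omega
    | succ j ih =>
      have hjlt : hnidx q r d j < q := ih (by omega)
      have h2 := (nxt_spec q r d hjlt).2.1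
      have h3 := hnidx_succ q r d j
      have h4 : hnidx q r d (j+1) ≠ q := by
        intro hcon
        have : mm q r d ≤ j + 1 :=
          Nat.sInf_le (show (j+1) ∈ {n | hnidx q r d n = q} from hcon)
        omega
      omega

include hq in
lemma mm_pos : 0 < mm q r d := by
  rcases Nat.eq_zero_or_pos (mm q r d) with h | h
  · exfalso
    have := (mm_spec q r d hq).1
    rw [h, hnidx_zero] at this
    omega
  · exact h

include hq in
lemma hnidx_strict : ∀ j j', j < j' → j' ≤ mm q r d → hnidx q r d j < hnidx q r d j' := by
  intro j j' hjj hj'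
  induction j' with
  | zero => omega
  | succ j' ih =>
    have hstep : hnidx q r d j' < hnidx q r d (j'+1) := by
      have hlt : hnidx q r d j' < q := (mm_spec q r d hq).2 j' (by omega)
      have := (nxt_spec q r d hlt).1
      rw [hnidx_succ]
      omega
    rcases Nat.lt_or_ge j j' with h | h
    · exact lt_trans (ih h (by omega)) hstep
    · have : j = j' := by omega
      rw [this]; exact hstep

include hq in
lemma hnidx_le_q {j : ℕ} (hj : j ≤ mm q r d) : hnidx q r d j ≤ q := by
  rcases Nat.lt_or_ge j (mm q r d) with h | h
  · exact le_of_lt ((mm_spec q r d hq).2 j h)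
  · have : j = mm q r d := by omega
    rw [this, (mm_spec q r d hq).1]

include hq in
lemma hn_nxt {j : ℕ} (hj1 : 1 ≤ j) (hjm : j ≤ mm q r d) :
    hnidx q r d j = nxt q r d (hnidx q r d (j-1)) := by
  have := hnidx_succ q r d (j-1)
  have hj : j - 1 + 1 = j := by omega
  rw [hj] at this
  exact this

end HN

lemma sum_Ico_eq (f : ℕ → ℝ) {a b : ℕ} (hab : a ≤ b) :
    ∑ i ∈ Ico a b, f i = (∑ i ∈ range b, f i) - ∑ i ∈ range a, f i := by
  rw [Finset.range_eq_Ico, Finset.range_eq_Ico, eq_sub_iff_add_eq, add_comm]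
  exact Finset.sum_Ico_consecutive f (Nat.zero_le a) hab

lemma telescope (g : ℕ → ℝ) (n : ℕ) : ∑ j ∈ Icc 1 n, (g j - g (j-1)) = g n - g 0 := by
  induction n with
  | zero => simp
  | succ n ih =>
    rw [Finset.sum_Icc_succ_top (by omega), ih]
    simp

section Main

variable (q : ℕ) (r d : ℕ → ℝ) (hq : 1 ≤ q) (hr : ∀ i, i < q → 0 < r i)

include hq hr in
lemma sl_eq {a b : ℕ} (hab : a ≤ b) :
    sl r d a b = (∑ i ∈ Ico a b, d i) / (∑ i ∈ Ico a b, r i) := by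
  rw [sl, sum_Ico_eq d hab, sum_Ico_eq r hab, dd, dd, rr, rr]

include hq hr in
lemma hn_dec : ∀ j, 1 ≤ j → j < mm q r d →
    (∑ i ∈ Ico (hnidx q r d j) (hnidx q r d (j+1)), d i) /
      (∑ i ∈ Ico (hnidx q r d j) (hnidx q r d (j+1)), r i) <
    (∑ i ∈ Ico (hnidx q r d (j-1)) (hnidx q r d j), d i) /
      (∑ i ∈ Ico (hnidx q r d (j-1)) (hnidx q r d j), r i) := by
  intro j hj1 hjm
  set I := hnidx q r d with hI
  set m := mm q r d with hm
  have hab : I (j-1) < I j := hnidx_strict q r d hq (j-1) j (by omega) (by omega)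
  have hbc : I j < I (j+1) := hnidx_strict q r d hq j (j+1) (by omega) (by omega)
  have hbq : I j < q := (mm_spec q r d hq).2 j hjm
  have hcq : I (j+1) ≤ q := hnidx_le_q q r d hq (by omega)
  have haq : I (j-1) < q := lt_trans hab hbq
  have hIb : I j = nxt q r d (I (j-1)) := hn_nxt q r d hq hj1 (by omega)
  have hIc : I (j+1) = nxt q r d (I j) := by
    have := hnidx_succ q r d j
    exact this
  have hspec := nxt_spec q r d haq
  have hstrict : sl r d (I (j-1)) (I (j+1)) < sl r d (I (j-1)) (I j) := by
    rw [hIb]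
    exact hspec.2.2.2 (I (j+1)) (by rw [← hIb]; omega) hcq
  have hx1 : rr r (I (j-1)) < rr r (I j) := rr_lt q r hr hab (le_of_lt hbq)
  have hx2 : rr r (I j) < rr r (I (j+1)) := rr_lt q r hr hbc hcq
  have := mediant_lt (y1 := dd d (I (j-1))) (y2 := dd d (I j)) (y3 := dd d (I (j+1)))
    hx1 hx2 hstrict
  rw [← sl_eq q r d hq hr hab.le, ← sl_eq q r d hq hr hbc.le]
  exact this

include hq hr in
lemma hn_ub (w : ℕ → ℝ) (hw : ∃ i, i < q ∧ w i ≠ 0)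
    (hwmono : ∀ i j, i ≤ j → j < q → w i ≤ w j) :
    -(∑ i ∈ range q, d i * w i) / Real.sqrt (∑ i ∈ range q, r i * w i ^ 2)
      ≤ Real.sqrt (∑ j ∈ Icc 1 (mm q r d),
          (∑ i ∈ Ico (hnidx q r d (j-1)) (hnidx q r d j), d i) ^ 2 /
          (∑ i ∈ Ico (hnidx q r d (j-1)) (hnidx q r d j), r i)) := by
  set I := hnidx q r d with hI
  set m := mm q r d with hm
  have h0 : I 0 = 0 := hnidx_zero q r d
  have hmq : I m = q := (mm_spec q r d hq).1
  have hmono : ∀ j j', j < j' → j' ≤ m → I j < I j' := fun j j' h h' =>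
    hnidx_strict q r d hq j j' h h'
  have hidxle : ∀ j, j ≤ m → I j ≤ q := fun j hj => hnidx_le_q q r d hq hj
  set D : ℕ → ℝ := fun j => ∑ i ∈ Ico (I (j-1)) (I j), d i with hD
  set R : ℕ → ℝ := fun j => ∑ i ∈ Ico (I (j-1)) (I j), r i with hR
  set μ : ℕ → ℝ := fun j => sl r d (I (j-1)) (I j) with hμ
  set T : ℝ := ∑ j ∈ Icc 1 m, (D j)^2 / R j with hTdef
  have hRpos : ∀ j, 1 ≤ j → j ≤ m → 0 < R j := by
    intro j h1 h2
    exact block_pos q r hr (hmono (j-1) j (by omega) h2) (hidxle j h2)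
  have hDbr : ∀ j, 1 ≤ j → j ≤ m → D j = dd d (I j) - dd d (I (j-1)) := by
    intro j h1 h2
    simp only [hD]
    rw [sum_Ico_eq d (hmono (j-1) j (by omega) h2).le, dd, dd]
  have hRbr : ∀ j, 1 ≤ j → j ≤ m → R j = rr r (I j) - rr r (I (j-1)) := by
    intro j h1 h2
    simp only [hR]
    rw [sum_Ico_eq r (hmono (j-1) j (by omega) h2).le, rr, rr]
  have hμbr : ∀ j, 1 ≤ j → j ≤ m → μ j = D j / R j := by
    intro j h1 h2
    simp only [hμ]
    rw [sl_eq q r d hq hr (hmono (j-1) j (by omega) h2).le]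
  have hμR : ∀ j, 1 ≤ j → j ≤ m → μ j * R j = D j := by
    intro j h1 h2
    rw [hμbr j h1 h2]
    exact div_mul_cancel₀ _ (hRpos j h1 h2).ne'
  -- auxiliary modified coefficients
  set d' : ℕ → ℝ := fun i => μ (blk I i) * r i with hd'
  have hblk : ∀ i, i < q → 1 ≤ blk I i ∧ blk I i ≤ m ∧
      I (blk I i - 1) ≤ i ∧ i < I (blk I i) :=
    fun i hi => blk_spec hmono h0 hmq hi
  have hblkeq : ∀ j i, 1 ≤ j → j ≤ m → I (j-1) ≤ i → i < I j → blk I i = j :=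
    fun j i a b c e => blk_eq hmono h0 hmq a b c e
  have hkey1 : ∀ j, 1 ≤ j → j ≤ m → ∑ i ∈ Ico (I (j-1)) (I j), d' i = D j := by
    intro j h1 h2
    have hcg : ∀ i ∈ Ico (I (j-1)) (I j), d' i = μ j * r i := by
      intro i hi
      simp only [Finset.mem_Ico] at hi
      simp only [hd', hblkeq j i h1 h2 hi.1 hi.2]
    rw [Finset.sum_congr rfl hcg, ← Finset.mul_sum]
    exact hμR j h1 h2
  have hprefix : ∀ n, n ≤ m → ∑ i ∈ range (I n), d' i = dd d (I n) := by
    intro n hn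
    rw [sum_blocks d' I h0 n (fun j hj => (hmono j (j+1) (by omega) (by omega)).le)]
    have hcg : ∀ j ∈ Icc 1 n, ∑ i ∈ Ico (I (j-1)) (I j), d' i
        = dd d (I j) - dd d (I (j-1)) := by
      intro j hj
      simp only [Finset.mem_Icc] at hj
      rw [hkey1 j hj.1 (by omega), hDbr j hj.1 (by omega)]
    rw [Finset.sum_congr rfl hcg, telescope (fun j => dd d (I j)) n]
    simp [h0, dd]
  have hmaj : ∀ k, k ≤ q → dd d k ≤ ∑ i ∈ range k, d' i := by
    intro k hk
    rcases eq_or_lt_of_le hk with heq | hlt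
    · subst heq
      rw [← hmq, hprefix m le_rfl]
    · -- k < q
      obtain ⟨hJ1, hJm, hJlo, hJhi⟩ := hblk k hlt
      set J := blk I k with hJ
      have hsplit : ∑ i ∈ range k, d' i
          = (∑ i ∈ range (I (J-1)), d' i) + ∑ i ∈ Ico (I (J-1)) k, d' i := by
        rw [Finset.range_eq_Ico, Finset.range_eq_Ico]
        exact (Finset.sum_Ico_consecutive d' (Nat.zero_le _) hJlo).symm
      have hpre : ∑ i ∈ range (I (J-1)), d' i = dd d (I (J-1)) :=
        hprefix (J-1) (by omega)
      have hseg : ∑ i ∈ Ico (I (J-1)) k, d' i = μ J * (rr r k - rr r (I (J-1))) := by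
        have hcg : ∀ i ∈ Ico (I (J-1)) k, d' i = μ J * r i := by
          intro i hi
          simp only [Finset.mem_Ico] at hi
          simp only [hd', hblkeq J i hJ1 hJm hi.1 (lt_trans hi.2 hJhi)]
        rw [Finset.sum_congr rfl hcg, ← Finset.mul_sum, sum_Ico_eq r hJlo, rr, rr]
      rw [hsplit, hpre, hseg]
      rcases eq_or_lt_of_le hJlo with heq2 | hlt2
      · rw [← heq2]
        simp
      · -- I (J-1) < k : use slope bound
        have haq : I (J-1) < q := lt_of_lt_of_le (hmono (J-1) J (by omega) hJm)
          (hidxle J hJm)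
        have hIJ : I J = nxt q r d (I (J-1)) := hn_nxt q r d hq hJ1 hJm
        have hsl : sl r d (I (J-1)) k ≤ μ J := by
          simp only [hμ]
          rw [hIJ]
          exact (nxt_spec q r d haq).2.2.1 k hlt2 hk
        have hden : 0 < rr r k - rr r (I (J-1)) := by
          have := rr_lt q r hr hlt2 hk
          linarith
        rw [sl, div_le_iff₀ hden] at hsl
        linarith
  -- Abel summation step
  set g : ℕ → ℝ := fun i => d i - d' i with hg
  have hgsum : ∀ k, ∑ i ∈ range k, g i = dd d k - ∑ i ∈ range k, d' i := by
    intro k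
    simp only [hg, dd]
    rw [Finset.sum_sub_distrib]
  have hgq : ∑ i ∈ range q, g i = 0 := by
    rw [hgsum q, ← hmq, hprefix m le_rfl]
    ring
  have habel := Finset.sum_range_by_parts w g q
  simp only [smul_eq_mul] at habel
  have hnonneg : 0 ≤ ∑ i ∈ range q, w i * g i := by
    rw [habel, hgq, mul_zero, zero_sub, neg_nonneg]
    apply Finset.sum_nonpos
    intro i hi
    simp only [Finset.mem_range] at hi
    have h1 : w i ≤ w (i+1) := hwmono i (i+1) (by omega) (by omega)
    have h2 : ∑ j ∈ range (i+1), g j ≤ 0 := by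
      rw [hgsum (i+1)]
      have := hmaj (i+1) (by omega)
      linarith
    exact mul_nonpos_of_nonneg_of_nonpos (by linarith) h2
  have hstep1 : ∑ i ∈ range q, d' i * w i ≤ ∑ i ∈ range q, d i * w i := by
    have : ∑ i ∈ range q, w i * g i
        = (∑ i ∈ range q, d i * w i) - ∑ i ∈ range q, d' i * w i := by
      rw [← Finset.sum_sub_distrib]
      apply Finset.sum_congr rfl
      intro i _
      simp only [hg]
      ring
    rw [this] at hnonneg
    linarith
  -- Cauchy-Schwarz step
  set Q : ℝ := ∑ i ∈ range q, r i * w i ^ 2 with hQdef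
  have hcs := Finset.sum_mul_sq_le_sq_mul_sq (range q)
    (fun i => -(μ (blk I i)) * Real.sqrt (r i)) (fun i => Real.sqrt (r i) * w i)
  have hL : ∑ i ∈ range q, (-(μ (blk I i)) * Real.sqrt (r i)) * (Real.sqrt (r i) * w i)
      = -(∑ i ∈ range q, d' i * w i) := by
    rw [← Finset.sum_neg_distrib]
    apply Finset.sum_congr rfl
    intro i hi
    simp only [Finset.mem_range] at hi
    simp only [hd']
    linear_combination (-(μ (blk I i)) * w i) * Real.mul_self_sqrt (hr i hi).le
  have hF2 : ∑ i ∈ range q, (-(μ (blk I i)) * Real.sqrt (r i)) ^ 2 = T := by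
    have hcg : ∀ i ∈ range q, (-(μ (blk I i)) * Real.sqrt (r i)) ^ 2
        = μ (blk I i) ^ 2 * r i := by
      intro i hi
      simp only [Finset.mem_range] at hi
      linear_combination (μ (blk I i))^2 * Real.sq_sqrt (hr i hi).le
    rw [Finset.sum_congr rfl hcg]
    have hdec2 : ∑ i ∈ range q, μ (blk I i) ^ 2 * r i
        = ∑ j ∈ Icc 1 m, ∑ i ∈ Ico (I (j-1)) (I j), μ (blk I i) ^ 2 * r i := by
      rw [← hmq]
      exact sum_blocks _ I h0 m (fun j hj => (hmono j (j+1) (by omega) (by omega)).le)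
    rw [hdec2, hTdef]
    apply Finset.sum_congr rfl
    intro j hj
    simp only [Finset.mem_Icc] at hj
    have hcg2 : ∀ i ∈ Ico (I (j-1)) (I j), μ (blk I i) ^ 2 * r i = μ j ^ 2 * r i := by
      intro i hi
      simp only [Finset.mem_Ico] at hi
      rw [hblkeq j i hj.1 hj.2 hi.1 hi.2]
    rw [Finset.sum_congr rfl hcg2, ← Finset.mul_sum]
    have hR0 : R j ≠ 0 := (hRpos j hj.1 hj.2).ne'
    have : ∑ i ∈ Ico (I (j-1)) (I j), r i = R j := by rw [hR]
    rw [this, hμbr j hj.1 hj.2]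
    field_simp
  have hG2 : ∑ i ∈ range q, (Real.sqrt (r i) * w i) ^ 2 = Q := by
    rw [hQdef]
    apply Finset.sum_congr rfl
    intro i hi
    simp only [Finset.mem_range] at hi
    linear_combination (w i)^2 * Real.sq_sqrt (hr i hi).le
  rw [hL, hF2, hG2] at hcs
  have hTnn : 0 ≤ T := by
    rw [hTdef]
    apply Finset.sum_nonneg
    intro j hj
    simp only [Finset.mem_Icc] at hj
    exact div_nonneg (sq_nonneg _) (hRpos j hj.1 hj.2).le
  have hstep2 : -(∑ i ∈ range q, d' i * w i) ≤ Real.sqrt T * Real.sqrt Q := by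
    have h1 : -(∑ i ∈ range q, d' i * w i)
        ≤ Real.sqrt ((-(∑ i ∈ range q, d' i * w i)) ^ 2) := by
      rw [Real.sqrt_sq_eq_abs]
      exact le_abs_self _
    have h2 : Real.sqrt ((-(∑ i ∈ range q, d' i * w i)) ^ 2) ≤ Real.sqrt (T * Q) :=
      Real.sqrt_le_sqrt hcs
    rw [Real.sqrt_mul hTnn] at h2
    linarith
  -- positivity of Q
  obtain ⟨i0, hi0q, hi0⟩ := hw
  have hQpos : 0 < Q := by
    rw [hQdef]
    have h1 : 0 < r i0 * w i0 ^ 2 := by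
      have := hr i0 hi0q
      have hww : 0 < w i0 ^ 2 := by positivity
      positivity
    have h2 : ∀ i ∈ range q, 0 ≤ r i * w i ^ 2 := by
      intro i hi
      simp only [Finset.mem_range] at hi
      have := (hr i hi).le
      positivity
    exact lt_of_lt_of_le h1 (Finset.single_le_sum h2 (Finset.mem_range.2 hi0q))
  have hQs : 0 < Real.sqrt Q := Real.sqrt_pos.2 hQpos
  rw [div_le_iff₀ hQs]
  calc -(∑ i ∈ range q, d i * w i) ≤ -(∑ i ∈ range q, d' i * w i) := by linarith
    _ ≤ Real.sqrt T * Real.sqrt Q := hstep2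

end Main

end HNaux


open HNaux in
/-- The supremum over nonzero weakly increasing weight vectors `w` of
`Ψ(w) = -(Σ dᵢ wᵢ)/(Σ rᵢ wᵢ²)^{1/2}` equals the maximum of
`Φ(P) = (Σⱼ Dⱼ²/Rⱼ)^{1/2}` over all slope-decreasing coarsenings `P` of the data;
in particular both the supremum and the maximum are finite and attained. -/
theorem statement0 (q : ℕ) (hq : 1 ≤ q) (r d : ℕ → ℝ)
    (hr : ∀ i, i < q → 0 < r i) :
    ∃ M : ℝ,
      -- M is the maximum of Φ over slope-decreasing coarsenings
      IsGreatest
        {x : ℝ | ∃ m : ℕ, ∃ idx : ℕ → ℕ,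
          0 < m ∧
          (∀ j j' : ℕ, j < j' → j' ≤ m → idx j < idx j') ∧
          idx 0 = 0 ∧ idx m = q ∧
          -- slope-decreasing: D_j/R_j > D_{j+1}/R_{j+1} for 1 ≤ j < m
          (∀ j : ℕ, 1 ≤ j → j < m →
            (∑ i ∈ Finset.Ico (idx j) (idx (j+1)), d i) /
              (∑ i ∈ Finset.Ico (idx j) (idx (j+1)), r i) <
            (∑ i ∈ Finset.Ico (idx (j-1)) (idx j), d i) /
              (∑ i ∈ Finset.Ico (idx (j-1)) (idx j), r i)) ∧
          x = Real.sqrt (∑ j ∈ Finset.Icc 1 m,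
            (∑ i ∈ Finset.Ico (idx (j-1)) (idx j), d i) ^ 2 /
              (∑ i ∈ Finset.Ico (idx (j-1)) (idx j), r i))} M ∧
      -- M is also the maximum of Ψ over nonzero weakly increasing vectors
      IsGreatest
        {x : ℝ | ∃ w : ℕ → ℝ,
          (∃ i, i < q ∧ w i ≠ 0) ∧
          (∀ i j : ℕ, i ≤ j → j < q → w i ≤ w j) ∧
          x = -(∑ i ∈ Finset.range q, d i * w i) /
                Real.sqrt (∑ i ∈ Finset.range q, r i * w i ^ 2)} M := by
  classical
  set I := HNaux.hnidx q r d with hI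
  set m := HNaux.mm q r d with hm
  set T : ℝ := ∑ j ∈ Finset.Icc 1 m,
      (∑ i ∈ Finset.Ico (I (j-1)) (I j), d i) ^ 2 /
        (∑ i ∈ Finset.Ico (I (j-1)) (I j), r i) with hT
  have hm0 : 0 < m := mm_pos q r d hq
  have hmono : ∀ j j', j < j' → j' ≤ m → I j < I j' := hnidx_strict q r d hq
  have h0 : I 0 = 0 := hnidx_zero q r d
  have hmq : I m = q := (mm_spec q r d hq).1
  have hdec := hn_dec q r d hq hr
  have hub : ∀ w : ℕ → ℝ, (∃ i, i < q ∧ w i ≠ 0) →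
      (∀ i j : ℕ, i ≤ j → j < q → w i ≤ w j) →
      -(∑ i ∈ Finset.range q, d i * w i) /
        Real.sqrt (∑ i ∈ Finset.range q, r i * w i ^ 2) ≤ Real.sqrt T := by
    intro w h1 h2
    rw [hT]
    exact hn_ub q r d hq hr w h1 h2
  refine ⟨Real.sqrt T, ⟨⟨m, I, hm0, hmono, h0, hmq, hdec, by rw [hT]⟩, ?_⟩, ?_, ?_⟩
  · -- upper bound for the Φ set
    rintro x ⟨m', idx', hm0', hmono', h0', hmq', hdec', hxeq⟩
    by_cases hT0 : (∑ j ∈ Finset.Icc 1 m',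
        (∑ i ∈ Finset.Ico (idx' (j-1)) (idx' j), d i) ^ 2 /
          (∑ i ∈ Finset.Ico (idx' (j-1)) (idx' j), r i)) = 0
    · rw [hxeq, hT0, Real.sqrt_zero]
      exact Real.sqrt_nonneg _
    · obtain ⟨w, hw1, hw2, hw3⟩ :=
        cons_attain q r d hr m' idx' hm0' hmono' h0' hmq' hdec' hT0
      rw [hxeq, ← hw3]
      exact hub w hw1 hw2
  · -- membership in the Ψ set
    by_cases hT0 : T = 0
    · refine ⟨fun _ => 1, ⟨0, by omega, one_ne_zero⟩, fun i j _ _ => le_rfl, ?_⟩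
      have hRpos : ∀ j ∈ Finset.Icc 1 m, 0 < ∑ i ∈ Finset.Ico (I (j-1)) (I j), r i := by
        intro j hj
        simp only [Finset.mem_Icc] at hj
        exact block_pos q r hr (hmono (j-1) j (by omega) hj.2)
          (by rw [← hmq]; exact idx_mono hmono hj.2 le_rfl)
      have hterms : ∀ j ∈ Finset.Icc 1 m,
          (∑ i ∈ Finset.Ico (I (j-1)) (I j), d i) ^ 2 /
            (∑ i ∈ Finset.Ico (I (j-1)) (I j), r i) = 0 := by
        rw [← Finset.sum_eq_zero_iff_of_nonneg]
        · rw [← hT]; exact hT0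
        · intro j hj
          exact div_nonneg (sq_nonneg _) (hRpos j hj).le
      have hD0 : ∀ j ∈ Finset.Icc 1 m, (∑ i ∈ Finset.Ico (I (j-1)) (I j), d i) = 0 := by
        intro j hj
        have h1 := hterms j hj
        have h2 := (hRpos j hj).ne'
        rw [div_eq_zero_iff] at h1
        rcases h1 with h1 | h1
        · exact pow_eq_zero_iff (by omega) |>.1 h1
        · exact absurd h1 h2
      have hdq : ∑ i ∈ Finset.range q, d i = 0 := by
        rw [← hmq, sum_blocks d I h0 m (fun j hj => (hmono j (j+1) (by omega) (by omega)).le)]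
        exact Finset.sum_eq_zero hD0
      rw [hT0, Real.sqrt_zero]
      simp [hdq]
    · obtain ⟨w, hw1, hw2, hw3⟩ :=
        cons_attain q r d hr m I hm0 hmono h0 hmq hdec (by rw [← hT]; exact hT0)
      refine ⟨w, hw1, hw2, ?_⟩
      rw [hw3, hT]
  · -- upper bound for the Ψ set
    rintro x ⟨w, hw1, hw2, hxeq⟩
    rw [hxeq]
    exact hub w hw1 hw2
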